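/- For integers g ≥ 2, k ≥ 3, and any ε with 0 < ε < 1, there exists G such that for all g ≥ G, q_{g,k}(k-1-ε) < 0, where q_{g,k}(x) = x^{2g+1} - (k-1)x^{2g} + (k-1)x - 1. Consequently q_{g,k} has a real root in the interval (k-1-ε, k-1) for all sufficiently large g. -/
import Mathlib


theorem q_eventually_neg (k : ℕ) (hk : 3 ≤ k) (ε : ℝ) (hε : 0 < ε) (hε1 : ε < 1) :
    ∃ G : ℕ, ∀ g : ℕ, G ≤ g → 2 ≤ g →
      (((k : ℝ) - 1 - ε) ^ (2 * g + 1) - ((k : ℝ) - 1) * ((k : ℝ) - 1 - ε) ^ (2 * g)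
          + ((k : ℝ) - 1) * ((k : ℝ) - 1 - ε) - 1 < 0) ∧
        ∃ x : ℝ, (k : ℝ) - 1 - ε < x ∧ x < (k : ℝ) - 1 ∧
          x ^ (2 * g + 1) - ((k : ℝ) - 1) * x ^ (2 * g) + ((k : ℝ) - 1) * x - 1 = 0 := by
  have hk3 : (3:ℝ) ≤ (k:ℝ) := by exact_mod_cast hk
  set c : ℝ := (k:ℝ) - 1 - ε with hc
  have hc1 : 1 < c := by simp only [hc]; linarith
  obtain ⟨n, hn⟩ := pow_unbounded_of_one_lt (((k:ℝ)-1)*c/ε) hc1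
  refine ⟨n, fun g hg hg2 => ?_⟩
  have hcg : c ^ n ≤ c ^ (2*g) := pow_le_pow_right₀ hc1.le (by omega)
  have hneg : c ^ (2*g+1) - ((k:ℝ)-1) * c^(2*g) + ((k:ℝ)-1)*c - 1 < 0 := by
    have h1 : ((k:ℝ)-1)*c/ε < c^(2*g) := lt_of_lt_of_le hn hcg
    have h2 : ((k:ℝ)-1)*c < ε * c^(2*g) := by
      rw [div_lt_iff₀ hε] at h1; linarith
    have h3 : c ^ (2*g+1) = c^(2*g)*c := pow_succ c (2*g)
    nlinarith [pow_pos (lt_trans one_pos hc1) (2*g)]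
  refine ⟨hneg, ?_⟩
  set f : ℝ → ℝ := fun x => x ^ (2*g+1) - ((k:ℝ)-1)*x^(2*g) + ((k:ℝ)-1)*x - 1 with hf
  have hcont : ContinuousOn f (Set.Icc c ((k:ℝ)-1)) := by
    apply Continuous.continuousOn; fun_prop
  have hpos : (0:ℝ) < f ((k:ℝ)-1) := by
    have h3 : ((k:ℝ)-1) ^ (2*g+1) = ((k:ℝ)-1)^(2*g)*((k:ℝ)-1) := pow_succ _ _
    simp only [hf]
    nlinarith
  have hab : c ≤ (k:ℝ)-1 := by simp only [hc]; linarith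
  have hIVT := intermediate_value_Ioo hab hcont
  have h0 : (0:ℝ) ∈ Set.Ioo (f c) (f ((k:ℝ)-1)) := ⟨hneg, hpos⟩
  obtain ⟨x, hx, hfx⟩ := hIVT h0
  exact ⟨x, hx.1, hx.2, hfx⟩
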